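/- arXiv:1704.04705 — 3 statements merged into one kernel-verified Lean document; each statement's English description precedes it below -/
import Mathlib

section
/- For s ∈ ℂ with Re(s) ≤ -1, the function f(x) = x^{-s} on (0,∞) is NOT asymptotically flat; specifically, for every x > 0 and every integer n ≥ 1, |(n+x)^{-s} - n^{-s}| ≥ x. -/
/-- For `s : ℂ` with `Re s ≤ -1`, the function `x ↦ x^{-s}` is not asymptotically flat;
specifically, for every `x > 0` and every integer `n ≥ 1`, `|(n+x)^{-s} - n^{-s}| ≥ x`. -/
theorem cpow_diff_lower_bound (s : ℂ) (hs : s.re ≤ -1) (x : ℝ) (hx : 0 < x)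
    (n : ℕ) (hn : 1 ≤ n) :
    x ≤ ‖((n + x : ℝ) : ℂ) ^ (-s) - ((n : ℝ) : ℂ) ^ (-s)‖ := by
  set r : ℝ := (-s).re with hr
  have hr1 : (1 : ℝ) ≤ r := by
    simp only [hr, Complex.neg_re]; linarith
  have hN : (1 : ℝ) ≤ (n : ℝ) := by exact_mod_cast hn
  have hNpos : (0 : ℝ) < n := by linarith
  have hNx : (0 : ℝ) < (n : ℝ) + x := by linarith
  have hA : ‖((n + x : ℝ) : ℂ) ^ (-s)‖ = ((n : ℝ) + x) ^ r := by
    rw [Complex.norm_cpow_eq_rpow_re_of_pos hNx]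
  have hB : ‖((n : ℝ) : ℂ) ^ (-s)‖ = (n : ℝ) ^ r := by
    rw [Complex.norm_cpow_eq_rpow_re_of_pos hNpos]
  have key : (n : ℝ) ^ r + x ≤ ((n : ℝ) + x) ^ r := by
    have hz : (0 : ℝ) ≤ x / n := le_of_lt (div_pos hx hNpos)
    have hbern : 1 + r * (x / n) ≤ (1 + x / n) ^ r :=
      one_add_mul_self_le_rpow_one_add (by linarith) hr1
    have hsplit : ((n : ℝ) + x) = (n : ℝ) * (1 + x / n) := by
      field_simp
    calc (n : ℝ) ^ r + x
        ≤ (n : ℝ) ^ r + x * (n : ℝ) ^ (r - 1) := by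
          nlinarith [Real.one_le_rpow hN (by linarith : (0:ℝ) ≤ r - 1)]
      _ = (n : ℝ) ^ r * (1 + r * (x / n)) - (n : ℝ) ^ r * ((r - 1) * (x / n)) := by
          have h1 : (n : ℝ) ^ r = (n : ℝ) ^ (r - 1) * n := by
            rw [← Real.rpow_add_one hNpos.ne']
            norm_num
          rw [h1]; field_simp; ring
      _ ≤ (n : ℝ) ^ r * (1 + r * (x / n)) := by
          have : 0 ≤ (n : ℝ) ^ r * ((r - 1) * (x / n)) := by
            apply mul_nonneg (Real.rpow_nonneg (le_of_lt hNpos) r)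
            exact mul_nonneg (by linarith) hz
          linarith
      _ ≤ (n : ℝ) ^ r * (1 + x / n) ^ r := by
          exact mul_le_mul_of_nonneg_left hbern (Real.rpow_nonneg (le_of_lt hNpos) r)
      _ = ((n : ℝ) + x) ^ r := by
          rw [hsplit, Real.mul_rpow (le_of_lt hNpos) (by positivity)]
  calc x ≤ ((n : ℝ) + x) ^ r - (n : ℝ) ^ r := by linarith
    _ = ‖((n + x : ℝ) : ℂ) ^ (-s)‖ - ‖((n : ℝ) : ℂ) ^ (-s)‖ := by
        rw [hA, hB]
    _ ≤ ‖((n + x : ℝ) : ℂ) ^ (-s) - ((n : ℝ) : ℂ) ^ (-s)‖ := norm_sub_norm_le _ _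
end

section
/- If f : (0,∞) → ℂ is asymptotically flat and summable, then for every natural number m, (Σf)(m) equals the ordinary finite sum Σ_{ν=1}^m f(ν) (and (Σf)(0) = 0). -/
open Filter Topology

/-- `f` is asymptotically flat on `(0,∞)`: `f(n+x) - f(n) → 0` for every `x > 0`. -/
def AsympFlat (f : ℝ → ℂ) : Prop :=
  ∀ x : ℝ, 0 < x → Tendsto (fun n : ℕ => f (n + x) - f n) atTop (𝓝 0)

/-- The approximating sequence `n ↦ x f(n) + ∑_{ν=1}^n (f(ν) - f(ν+x))`. -/
noncomputable def sumSeq (f : ℝ → ℂ) (x : ℝ) (n : ℕ) : ℂ :=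
  x * f n + ∑ ν ∈ Finset.Icc 1 n, (f ν - f (ν + x))

/-- `f` is summable: the limit of `sumSeq f x` exists for every `x > -1`. -/
def IsSummable (f : ℝ → ℂ) : Prop :=
  ∀ x : ℝ, -1 < x → ∃ L : ℂ, Tendsto (sumSeq f x) atTop (𝓝 L)

/-- The summation operator `Σ`: `(Σf)(x) = lim_{n→∞} sumSeq f x n`. -/
noncomputable def Sig (f : ℝ → ℂ) (x : ℝ) : ℂ := limUnder atTop (sumSeq f x)

lemma tele_aux (g : ℕ → ℂ) (m n : ℕ) :
    ∑ ν ∈ Finset.Icc 1 n, (g ν - g (ν + m)) =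
      ∑ ν ∈ Finset.Icc 1 m, g ν - ∑ k ∈ Finset.Icc 1 m, g (n + k) := by
  induction m with
  | zero => simp
  | succ m ih =>
    have hstep : ∑ ν ∈ Finset.Icc 1 n, (g (ν + m) - g (ν + m + 1)) =
        g (m + 1) - g (n + (m + 1)) := by
      have := Finset.sum_range_sub (fun i => -g (i + m + 1)) n
      rw [← Finset.Ico_add_one_right_eq_Icc, Finset.sum_Ico_eq_sum_range]
      simp only [Nat.add_sub_cancel] at *
      calc ∑ i ∈ Finset.range n, (g (1 + i + m) - g (1 + i + m + 1))
          = ∑ i ∈ Finset.range n, (-g (i + 1 + m + 1) - -g (i + m + 1)) := by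
            apply Finset.sum_congr rfl; intro i _; ring_nf
        _ = -g (n + m + 1) - -g (0 + m + 1) := this
        _ = g (m + 1) - g (n + (m + 1)) := by ring_nf
    have hsplit : ∀ ν, g ν - g (ν + (m + 1)) =
        (g ν - g (ν + m)) + (g (ν + m) - g (ν + m + 1)) := by
      intro ν
      have : ν + (m + 1) = ν + m + 1 := by ring
      rw [this]; ring
    rw [Finset.sum_congr rfl fun ν _ => hsplit ν, Finset.sum_add_distrib, ih, hstep,
      Finset.sum_Icc_succ_top (by omega : 1 ≤ m + 1),
      Finset.sum_Icc_succ_top (by omega : 1 ≤ m + 1)]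
    ring

/-- If `f` is asymptotically flat and summable, then for every natural number `m`,
`(Σf)(m)` is the ordinary finite sum `∑_{ν=1}^m f(ν)` (in particular `(Σf)(0) = 0`). -/
theorem Sig_nat (f : ℝ → ℂ) (hf : AsympFlat f) (hsum : IsSummable f) :
    ∀ m : ℕ, Sig f m = ∑ ν ∈ Finset.Icc 1 m, f ν := by
  intro m
  have key : Tendsto (sumSeq f m) atTop (𝓝 (∑ ν ∈ Finset.Icc 1 m, f ν)) := by
    have heq : ∀ n : ℕ, sumSeq f m n =
        ∑ ν ∈ Finset.Icc 1 m, f ν - ∑ k ∈ Finset.Icc 1 m, (f (n + k) - f n) := by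
      intro n
      unfold sumSeq
      have h1 : ∀ ν : ℕ, f ((ν : ℝ) + (m : ℝ)) = f ((ν + m : ℕ) : ℝ) := by
        intro ν; push_cast; ring_nf
      have h2 : ∑ ν ∈ Finset.Icc 1 n, (f ν - f ((ν : ℝ) + (m : ℝ))) =
          ∑ ν ∈ Finset.Icc 1 n, ((fun k : ℕ => f k) ν - (fun k : ℕ => f k) (ν + m)) := by
        apply Finset.sum_congr rfl; intro ν _; rw [h1]
      rw [h2, tele_aux (fun k : ℕ => f k) m n]
      have h3 : ∑ k ∈ Finset.Icc 1 m, (f ((n + k : ℕ) : ℝ) - f n) =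
          ∑ k ∈ Finset.Icc 1 m, f ((n + k : ℕ) : ℝ) - (m : ℂ) * f n := by
        rw [Finset.sum_sub_distrib, Finset.sum_const, Nat.card_Icc]
        simp [nsmul_eq_mul]
      have h4 : ∑ k ∈ Finset.Icc 1 m, (f ((n : ℝ) + (k : ℝ)) - f n) =
          ∑ k ∈ Finset.Icc 1 m, (f ((n + k : ℕ) : ℝ) - f n) := by
        apply Finset.sum_congr rfl; intro k _; push_cast; ring_nf
      rw [h4, h3]; push_cast; ring
    rw [show (𝓝 (∑ ν ∈ Finset.Icc 1 m, f ν)) = 𝓝 (∑ ν ∈ Finset.Icc 1 m, f ν - 0) by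
      rw [sub_zero]]
    apply Tendsto.congr (fun n => (heq n).symm)
    apply Tendsto.sub tendsto_const_nhds
    have : (0 : ℂ) = ∑ k ∈ Finset.Icc 1 m, (0 : ℂ) := by simp
    rw [this]
    apply tendsto_finset_sum
    intro k hk
    have hk1 : (0 : ℝ) < (k : ℝ) := by
      have := (Finset.mem_Icc.mp hk).1; exact_mod_cast Nat.lt_of_lt_of_le Nat.zero_lt_one this
    have := hf k hk1
    apply this.congr
    intro n
    norm_cast
  exact key.limUnder_eq
end

section
/- The function x ↦ log x on (0,∞) is summable, and (Σ log)(x) = log Γ(x+1) for all x > -1. -/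
open Filter Topology

lemma real_log_tendsto (x : ℝ) (hx : -1 < x) :
    Tendsto (fun n : ℕ => x * Real.log n + ∑ ν ∈ Finset.Icc 1 n,
        (Real.log ν - Real.log (ν + x))) atTop (𝓝 (Real.log (Real.Gamma (x + 1)))) := by
  rcases eq_or_ne x 0 with rfl | hx0
  · simpa using tendsto_const_nhds.congr (fun n => by simp [Real.Gamma_one])
  · have hΓpos : 0 < Real.Gamma (x + 1) := Real.Gamma_pos_of_pos (by linarith)
    have hP : Tendsto (fun n => x * Real.GammaSeq x n) atTop (𝓝 (Real.Gamma (x + 1))) := by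
      rw [Real.Gamma_add_one hx0]
      exact (Real.GammaSeq_tendsto_Gamma x).const_mul x
    have hlog := (Real.continuousAt_log hΓpos.ne').tendsto.comp hP
    refine hlog.congr' ?_
    filter_upwards [eventually_ge_atTop 1] with n hn
    have hnpos : (0:ℝ) < n := by exact_mod_cast hn
    have hfac : ∀ ν ∈ Finset.Icc 1 n, (0:ℝ) < ν + x := by
      intro ν hν
      have h1 : 1 ≤ ν := (Finset.mem_Icc.mp hν).1
      have : (1:ℝ) ≤ ν := by exact_mod_cast h1
      linarith
    have hnu : ∀ ν ∈ Finset.Icc 1 n, (0:ℝ) < ν := by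
      intro ν hν
      have h1 : 1 ≤ ν := (Finset.mem_Icc.mp hν).1
      have : (1:ℝ) ≤ ν := by exact_mod_cast h1
      linarith
    have hprodne : ∏ ν ∈ Finset.Icc 1 n, ((ν:ℝ) + x) ≠ 0 :=
      Finset.prod_ne_zero_iff.mpr (fun ν hν => (hfac ν hν).ne')
    have hdivne : ∀ ν ∈ Finset.Icc 1 n, (ν:ℝ) / (ν + x) ≠ 0 :=
      fun ν hν => div_ne_zero (hnu ν hν).ne' (hfac ν hν).ne'
    have h1 : ∏ j ∈ Finset.range (n + 1), (x + (j:ℝ))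
        = x * ∏ ν ∈ Finset.Icc 1 n, ((ν:ℝ) + x) := by
      rw [Finset.prod_range_succ']
      simp only [Nat.cast_zero, add_zero, mul_comm]
      congr 1
      rw [← Finset.Ico_add_one_right_eq_Icc, Finset.prod_Ico_eq_prod_range]
      refine Finset.prod_congr (by simp) fun j _ => by push_cast; ring
    have h3 : ((n.factorial : ℕ) : ℝ) = ∏ ν ∈ Finset.Icc 1 n, (ν : ℝ) := by
      rw [← Nat.cast_prod, ← Finset.Ico_add_one_right_eq_Icc, Finset.prod_Ico_id_eq_factorial]
    have hPeq : x * Real.GammaSeq x n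
        = (n:ℝ) ^ x * ∏ ν ∈ Finset.Icc 1 n, ((ν:ℝ) / (ν + x)) := by
      rw [Real.GammaSeq, h1, h3, Finset.prod_div_distrib]
      field_simp
    have hlogmul : Real.log ((n:ℝ) ^ x * ∏ ν ∈ Finset.Icc 1 n, ((ν:ℝ) / (ν + x)))
        = x * Real.log n + ∑ ν ∈ Finset.Icc 1 n, (Real.log ν - Real.log (ν + x)) := by
      rw [Real.log_mul (by positivity) (Finset.prod_ne_zero_iff.mpr hdivne),
        Real.log_rpow hnpos, Real.log_prod hdivne]
      congr 1
      exact Finset.sum_congr rfl fun ν hν =>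
        Real.log_div (hnu ν hν).ne' (hfac ν hν).ne'
    show Real.log (x * Real.GammaSeq x n) = _
    rw [hPeq]
    exact hlogmul

lemma sumSeq_log_tendsto (x : ℝ) (hx : -1 < x) :
    Tendsto (sumSeq (fun x : ℝ => (Real.log x : ℂ)) x) atTop
      (𝓝 ((Real.log (Real.Gamma (x + 1)) : ℝ) : ℂ)) := by
  have h := (Complex.continuous_ofReal.tendsto _).comp (real_log_tendsto x hx)
  refine h.congr fun n => ?_
  simp only [Function.comp_apply, sumSeq]
  push_cast
  ring

/-- The function `x ↦ log x` is summable, and `(Σ log)(x) = log Γ(x+1)` for all `x > -1`. -/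
theorem Sig_log :
    IsSummable (fun x : ℝ => (Real.log x : ℂ)) ∧
    ∀ x : ℝ, -1 < x →
      Sig (fun x : ℝ => (Real.log x : ℂ)) x = (Real.log (Real.Gamma (x + 1)) : ℂ) := by
  exact ⟨fun x hx => ⟨_, sumSeq_log_tendsto x hx⟩,
    fun x hx => (sumSeq_log_tendsto x hx).limUnder_eq⟩
end
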